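/- arXiv:2203.08582 — 8 statements merged into one kernel-verified Lean document; each statement's English description precedes it below -/
import Mathlib

section
/- The tensor A of order 4 and dimension 2 with entries a_{1112} = -2, a_{2111} = a_{2222} = 1 and all other entries zero is column sufficient but not column adequate. -/
open Finset Matrix

/-- For a tensor `A` of order `k+1` and dimension `n` (entries `A i f` with row index `i`
and remaining indices `f`), `tmul A x i = (A x^k)_i`. -/
def tmul {n k : ℕ} (A : Fin n → (Fin k → Fin n) → ℝ) (x : Fin n → ℝ) (i : Fin n) : ℝ :=
  ∑ f : Fin k → Fin n, A i f * ∏ j, x (f j)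

/-- A tensor is column adequate if `x_i (A x^{m-1})_i ≤ 0` for all `i` implies `A x^{m-1} = 0`. -/
def ColumnAdequate {n k : ℕ} (A : Fin n → (Fin k → Fin n) → ℝ) : Prop :=
  ∀ x : Fin n → ℝ, (∀ i, x i * tmul A x i ≤ 0) → ∀ i, tmul A x i = 0

def ColumnSufficient {n k : ℕ} (A : Fin n → (Fin k → Fin n) → ℝ) : Prop :=
  ∀ x : Fin n → ℝ, (∀ i, x i * tmul A x i ≤ 0) → ∀ i, x i * tmul A x i = 0

/-- The order-4 dimension-2 tensor with `a_{1112} = -2`, `a_{2111} = a_{2222} = 1`. -/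
noncomputable def exTensor2 : Fin 2 → (Fin 3 → Fin 2) → ℝ := fun i f =>
  if i = 0 ∧ f = ![0, 0, 1] then -2
  else if i = 1 ∧ f = ![0, 0, 0] then 1
  else if i = 1 ∧ f = ![1, 1, 1] then 1
  else 0

lemma sum_fin32 (g : (Fin 3 → Fin 2) → ℝ) :
    ∑ f, g f = g ![0,0,0] + g ![1,0,0] + g ![0,1,0] + g ![1,1,0]
      + g ![0,0,1] + g ![1,0,1] + g ![0,1,1] + g ![1,1,1] := by
  rw [← (finFunctionFinEquiv (m := 2) (n := 3)).symm.sum_comp g]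
  show ∑ i : Fin 8, _ = _
  rw [Fin.sum_univ_eight,
    show (finFunctionFinEquiv.symm 0 : Fin 3 → Fin 2) = ![0,0,0] from by decide,
    show (finFunctionFinEquiv.symm 1 : Fin 3 → Fin 2) = ![1,0,0] from by decide,
    show (finFunctionFinEquiv.symm 2 : Fin 3 → Fin 2) = ![0,1,0] from by decide,
    show (finFunctionFinEquiv.symm 3 : Fin 3 → Fin 2) = ![1,1,0] from by decide,
    show (finFunctionFinEquiv.symm 4 : Fin 3 → Fin 2) = ![0,0,1] from by decide,
    show (finFunctionFinEquiv.symm 5 : Fin 3 → Fin 2) = ![1,0,1] from by decide,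
    show (finFunctionFinEquiv.symm 6 : Fin 3 → Fin 2) = ![0,1,1] from by decide,
    show (finFunctionFinEquiv.symm 7 : Fin 3 → Fin 2) = ![1,1,1] from by decide]

lemma tmul0 (x : Fin 2 → ℝ) : tmul exTensor2 x 0 = -2 * (x 0 ^ 2 * x 1) := by
  rw [tmul, sum_fin32]
  simp (config := { decide := true }) [exTensor2, Fin.prod_univ_three]
  exact Or.inl (sq (x 0)).symm

lemma tmul1 (x : Fin 2 → ℝ) : tmul exTensor2 x 1 = x 0 ^3 + x 1 ^3 := by
  rw [tmul, sum_fin32]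
  simp (config := { decide := true }) [exTensor2, Fin.prod_univ_three]
  ring

/-- This tensor is column sufficient but not column adequate. -/
theorem exTensor2_column_sufficient_not_adequate :
    ColumnSufficient exTensor2 ∧ ¬ ColumnAdequate exTensor2 := by
  constructor
  · intro x h
    have h0 := h 0
    have h1 := h 1
    rw [tmul0] at h0
    rw [tmul1] at h1
    have hge : 0 ≤ x 0 ^ 3 * x 1 := by nlinarith
    have h4 : x 1 ^ 4 ≤ 0 := by nlinarith
    have hx1 : x 1 = 0 :=
      pow_eq_zero_iff (n := 4) (by norm_num) |>.mp
        (le_antisymm h4 (by positivity))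
    intro i
    fin_cases i
    · show x 0 * tmul exTensor2 x 0 = 0
      rw [tmul0, hx1]; ring
    · show x 1 * tmul exTensor2 x 1 = 0
      rw [hx1]; ring
  · intro hA
    have := hA ![1, 0] (by
      intro i
      fin_cases i
      · show _ * tmul exTensor2 ![1, 0] 0 ≤ 0
        rw [tmul0]; norm_num
      · show _ * tmul exTensor2 ![1, 0] 1 ≤ 0
        rw [tmul1]; norm_num) 1
    rw [tmul1] at this
    norm_num at this
end

section
/- If A is a column adequate tensor of order m and dimension n, then every principal sub-tensor of A is column adequate. -/
open Finset Matrix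

/-- Every principal sub-tensor of a column adequate tensor is column adequate. Here the
principal sub-tensor corresponding to a subset `J` of `[n]` with `|J| = r` is described
via an injection `e : Fin r ↪ Fin n` enumerating `J`. -/
theorem principal_subtensor_column_adequate {n k r : ℕ} (A : Fin n → (Fin k → Fin n) → ℝ)
    (h : ColumnAdequate A) (e : Fin r ↪ Fin n) :
    ColumnAdequate (fun i f => A (e i) (fun j => e (f j))) := by
  intro x hx
  set y : Fin n → ℝ := Function.extend e x 0 with hy
  have hye : ∀ i, y (e i) = x i := fun i => e.injective.extend_apply x 0 i
  have hy0 : ∀ j, (¬ ∃ i, e i = j) → y j = 0 := by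
    intro j hj
    simp [hy, Function.extend_apply' _ _ _ hj]
  -- key: tmul A y (e i) = tmul of subtensor
  have key : ∀ i, tmul A y (e i) = tmul (fun i f => A (e i) (fun j => e (f j))) x i := by
    intro i
    have hinj : Function.Injective (fun g : Fin k → Fin r => (fun j => e (g j))) := by
      intro g1 g2 hg
      funext j
      exact e.injective (congrFun hg j)
    unfold tmul
    have h1 : ∑ f ∈ Finset.univ.image (fun g : Fin k → Fin r => fun j => e (g j)),
        A (e i) f * ∏ j, y (f j)
        = ∑ g : Fin k → Fin r, A (e i) (fun j => e (g j)) * ∏ j, y (e (g j)) :=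
      Finset.sum_image (fun a _ b _ hab => hinj hab)
    rw [← Finset.sum_subset (Finset.subset_univ _), h1]
    · simp [hye]
    · intro f _ hf
      have : ∃ j, ¬ ∃ i', e i' = f j := by
        by_contra hc
        push_neg at hc
        choose g hg using hc
        exact hf (Finset.mem_image.2 ⟨g, Finset.mem_univ _, by funext j; exact hg j⟩)
      obtain ⟨j, hj⟩ := this
      have : y (f j) = 0 := hy0 _ hj
      rw [Finset.prod_eq_zero (Finset.mem_univ j) this, mul_zero]
  have hcond : ∀ i, y i * tmul A y i ≤ 0 := by
    intro i
    by_cases hi : ∃ i', e i' = i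
    · obtain ⟨i', rfl⟩ := hi
      rw [hye, key]
      exact hx i'
    · rw [hy0 i hi, zero_mul]
  intro i
  rw [← key]
  exact h y hcond (e i)
end

section
/- Let A be a tensor of order m and dimension n, and let P = diag(p_1,...,p_n), Q = diag(q_1,...,q_n) be diagonal matrices with p_i q_i > 0 for all i. Then A is column adequate if and only if the tensor P·A·Q (with entries b_{i1 i2...im} = p_{i1} a_{i1 i2...im} q_{i2}...q_{im}) is column adequate. -/
open Finset Matrix

lemma tmul_PAQ {n k : ℕ} (A : Fin n → (Fin k → Fin n) → ℝ) (p q : Fin n → ℝ)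
    (x : Fin n → ℝ) (i : Fin n) :
    tmul (fun i f => p i * A i f * ∏ j, q (f j)) x i
      = p i * tmul A (fun j => q j * x j) i := by
  unfold tmul
  rw [Finset.mul_sum]
  refine Finset.sum_congr rfl fun f _ => ?_
  rw [Finset.prod_mul_distrib]
  ring

/-- For diagonal matrices `P = diag(p)`, `Q = diag(q)` with `p_i q_i > 0`,
`A` is column adequate iff `P·A·Q` is column adequate. -/
theorem column_adequate_iff_PAQ {n k : ℕ} (A : Fin n → (Fin k → Fin n) → ℝ)
    (p q : Fin n → ℝ) (hpq : ∀ i, 0 < p i * q i) :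
    ColumnAdequate A ↔
      ColumnAdequate (fun i f => p i * A i f * ∏ j, q (f j)) := by
  have hp : ∀ i, p i ≠ 0 := fun i => left_ne_zero_of_mul (hpq i).ne'
  have hq : ∀ i, q i ≠ 0 := fun i => right_ne_zero_of_mul (hpq i).ne'
  constructor
  · intro hA x hx i
    rw [tmul_PAQ]
    have h0 : ∀ i, (q i * x i) * tmul A (fun j => q j * x j) i ≤ 0 := by
      intro i
      have h1 := hx i
      rw [tmul_PAQ] at h1
      nlinarith [mul_nonpos_of_nonneg_of_nonpos (sq_nonneg (q i)) h1, hpq i]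
    have := hA _ h0 i
    rw [this, mul_zero]
  · intro hB y hy i
    set x := fun j => y j / q j with hx
    have hyx : (fun j => q j * x j) = y := by
      funext j; field_simp [hx]; show q j * (y j / q j) = y j; rw [mul_div_assoc']; exact mul_div_cancel_left₀ _ (hq j)
    have hxle : ∀ i, x i * tmul (fun i f => p i * A i f * ∏ j, q (f j)) x i ≤ 0 := by
      intro i
      rw [tmul_PAQ, hyx]
      have : x i * (p i * tmul A y i) = (p i / q i) * (y i * tmul A y i) := by
        field_simp [hx]; ring
      rw [this]
      have hpos : 0 < p i / q i := by
        have := hpq i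
        rcases lt_or_gt_of_ne (hq i) with h | h
        · apply div_pos_of_neg_of_neg _ h; nlinarith
        · apply div_pos _ h; nlinarith
      exact mul_nonpos_of_nonneg_of_nonpos hpos.le (hy i)
    have := hB x hxle i
    rw [tmul_PAQ, hyx] at this
    exact (mul_eq_zero.mp this).resolve_left (hp i)
end

section
/- Every column adequate tensor is a P_0-tensor. -/
open Finset Matrix

/-- Every column adequate tensor is a `P₀`-tensor. -/
theorem column_adequate_is_P0 {n k : ℕ} (A : Fin n → (Fin k → Fin n) → ℝ)
    (h : ColumnAdequate A) :
    ∀ x : Fin n → ℝ, x ≠ 0 → ∃ i, x i ≠ 0 ∧ 0 ≤ x i * tmul A x i := by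
  intro x hx
  by_contra hc
  push_neg at hc
  have hall : ∀ i, x i * tmul A x i ≤ 0 := by
    intro i
    by_cases hxi : x i = 0
    · simp [hxi]
    · exact (hc i hxi).le
  have hz := h x hall
  obtain ⟨i, hi⟩ := Function.ne_iff.mp hx
  exact absurd (by simp [hz i]) (not_le.mpr (hc i hi))
end

section
/- Let A be a row diagonal tensor of even order m and dimension n. Then A is a column adequate tensor if and only if its majorization matrix M(A) is a column adequate matrix. -/
open Finset Matrix

/-- A tensor is row diagonal if `a_{i i2...im}` can be nonzero only when `i2 = ... = im`. -/
def RowDiagonal {n k : ℕ} (A : Fin n → (Fin k → Fin n) → ℝ) : Prop :=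
  ∀ i f, A i f ≠ 0 → ∀ j j' : Fin k, f j = f j'

/-- The majorization matrix of a tensor: `M(A)_{ij} = a_{ijj...j}`. -/
def majorization {n k : ℕ} (A : Fin n → (Fin k → Fin n) → ℝ) : Matrix (Fin n) (Fin n) ℝ :=
  fun i j => A i (fun _ => j)

/-- A square matrix `M` (over any finite index type) is column adequate if
`z_i (Mz)_i ≤ 0` for all `i` implies `Mz = 0`. -/
def MatrixColumnAdequate {ι : Type*} [Fintype ι] (M : Matrix ι ι ℝ) : Prop :=
  ∀ z : ι → ℝ, (∀ i, z i * M.mulVec z i ≤ 0) → M.mulVec z = 0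

lemma exists_pow_eq_of_odd {k : ℕ} (hk : Odd k) (z : ℝ) : ∃ x : ℝ, x ^ k = z := by
  have hk0 : k ≠ 0 := by rintro rfl; simp at hk
  rcases le_total 0 z with hz | hz
  · exact ⟨z ^ ((k : ℝ)⁻¹), Real.rpow_inv_natCast_pow hz hk0⟩
  · refine ⟨-((-z) ^ ((k : ℝ)⁻¹)), ?_⟩
    rw [hk.neg_pow, Real.rpow_inv_natCast_pow (by linarith) hk0, neg_neg]

lemma tmul_eq_mulVec {n k : ℕ} (hk : 0 < k) (A : Fin n → (Fin k → Fin n) → ℝ)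
    (hA : RowDiagonal A) (x : Fin n → ℝ) (i : Fin n) :
    tmul A x i = (majorization A).mulVec (fun j => x j ^ k) i := by
  have hne : Nonempty (Fin k) := ⟨⟨0, hk⟩⟩
  have h1 : tmul A x i =
      ∑ f ∈ Finset.univ.image (fun j : Fin n => (fun _ : Fin k => j)),
        A i f * ∏ j, x (f j) := by
    refine (Finset.sum_subset (Finset.subset_univ _) ?_).symm
    intro f _ hf
    have hf0 : A i f = 0 := by
      by_contra h
      exact hf (Finset.mem_image.2 ⟨f (Classical.arbitrary _), Finset.mem_univ _,
        (funext fun j => hA i f h (Classical.arbitrary _) j)⟩)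
    simp [hf0]
  rw [h1, Finset.sum_image (by
    intro a _ b _ h
    exact congrFun h (Classical.arbitrary _))]
  simp [majorization, Matrix.mulVec, dotProduct, Finset.prod_const]

/-- A row diagonal tensor of even order is column adequate iff its majorization matrix is
a column adequate matrix. -/
theorem row_diagonal_column_adequate_iff {m n : ℕ} (hm : Even m) (hm2 : 2 ≤ m)
    (A : Fin n → (Fin (m - 1) → Fin n) → ℝ) (hA : RowDiagonal A) :
    ColumnAdequate A ↔ MatrixColumnAdequate (majorization A) := by
  have hk : 0 < m - 1 := by omega
  have hkodd : Odd (m - 1) := by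
    rcases hm with ⟨p, hp⟩
    exact ⟨p - 1, by omega⟩
  have hkev : Even (m - 1 - 1) := by
    rcases hkodd with ⟨p, hp⟩
    exact ⟨p, by omega⟩
  have hsplit : ∀ y : ℝ, y ^ (m - 1) = y * y ^ (m - 1 - 1) := by
    intro y
    conv_lhs => rw [show m - 1 = (m - 1 - 1) + 1 from by omega]
    rw [pow_succ']
  have hkey := tmul_eq_mulVec hk A hA
  constructor
  · intro hCA z hz
    choose x hx using fun i => exists_pow_eq_of_odd hkodd (z i)
    have hzx : z = fun j => x j ^ (m - 1) := funext fun j => (hx j).symm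
    have h1 : ∀ i, x i * tmul A x i ≤ 0 := by
      intro i
      rw [hkey x i, ← hzx]
      rcases eq_or_ne (x i) 0 with h0 | h0
      · simp [h0]
      · have h2 : 0 < x i ^ (m - 1 - 1) := hkev.pow_pos h0
        have h3 := hz i
        have h4 : z i = x i * x i ^ (m - 1 - 1) := by rw [← hx i, hsplit]
        rw [h4] at h3
        by_contra hcon
        push_neg at hcon
        nlinarith [mul_pos hcon h2]
    have h5 := hCA x h1
    funext i
    have := h5 i
    rw [hkey x i, ← hzx] at this
    exact this
  · intro hM x hx i
    have h1 : ∀ i, (fun j => x j ^ (m - 1)) i *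
        (majorization A).mulVec (fun j => x j ^ (m - 1)) i ≤ 0 := by
      intro i
      have h5 : (0:ℝ) ≤ x i ^ (m - 1 - 1) := hkev.pow_nonneg _
      have h6 := hx i
      rw [hkey x i] at h6
      simp only
      rw [hsplit]
      nlinarith
    have h2 := hM _ h1
    rw [hkey x i, h2]
    rfl
end

section
/- Let A be a tensor of order m and dimension n, with the block matrix Ā = [[M(A), B],[O, O]] of size N×N (N ≥ n, B of size n×(N-n)). Then Ā is a column adequate matrix if and only if M(A) is a column adequate matrix and B = O. -/
open Finset Matrix

/-- The block matrix `Ā = [[M, B],[O, O]]` of size `N × N` (with `N = n + p`) is column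
adequate iff `M` is column adequate and `B = O`. -/
theorem block_matrix_column_adequate_iff {n p : ℕ}
    (M : Matrix (Fin n) (Fin n) ℝ) (B : Matrix (Fin n) (Fin p) ℝ) :
    MatrixColumnAdequate (Matrix.fromBlocks M B 0 0) ↔
      MatrixColumnAdequate M ∧ B = 0 := by
  constructor
  · intro h
    constructor
    · intro z hz
      have h1 := h (Sum.elim z 0) ?_
      · funext i
        have := congrFun h1 (Sum.inl i)
        simpa [Matrix.fromBlocks_mulVec] using this
      · rintro (i | j)
        · simpa [Matrix.fromBlocks_mulVec] using hz i
        · simp [Matrix.fromBlocks_mulVec]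
    · ext i j
      have h1 := h (Sum.elim 0 (Pi.single j 1)) ?_
      · have := congrFun h1 (Sum.inl i)
        simpa [Matrix.fromBlocks_mulVec, Matrix.mulVec_single] using this
      · rintro (i | j')
        · simp [Matrix.fromBlocks_mulVec]
        · simp [Matrix.fromBlocks_mulVec]
  · rintro ⟨hM, rfl⟩
    intro z hz
    have hz' : z = Sum.elim (z ∘ Sum.inl) (z ∘ Sum.inr) := by
      funext j; cases j <;> rfl
    rw [hz'] at hz ⊢
    have hx := hM (z ∘ Sum.inl) ?_
    · funext i
      cases i with
      | inl i => simpa [Matrix.fromBlocks_mulVec] using congrFun hx i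
      | inr j => simp [Matrix.fromBlocks_mulVec]
    · intro i
      simpa [Matrix.fromBlocks_mulVec] using hz (Sum.inl i)
end

section
/- Let A be a tensor of even order m and dimension n such that the auxiliary matrix Ā has the block form [[M(A), O],[O, O]], i.e., A x^{m-1} = M(A) x^{[m-1]} for all x. If M(A) is a column adequate matrix, then A is a column adequate tensor. -/
open Finset Matrix

/-- If `m` is even, `A x^{m-1} = M(A) x^{[m-1]}` for all `x` (the auxiliary matrix has the
block form `[[M(A), O],[O, O]]`), and `M(A)` is a column adequate matrix, then `A` is a
column adequate tensor. -/
theorem majorization_adequate_implies_tensor_adequate {m n : ℕ} (hm : Even m) (hm2 : 2 ≤ m)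
    (A : Fin n → (Fin (m - 1) → Fin n) → ℝ)
    (hblock : ∀ x : Fin n → ℝ, ∀ i,
      tmul A x i = (majorization A).mulVec (fun j => x j ^ (m - 1)) i)
    (hM : MatrixColumnAdequate (majorization A)) :
    ColumnAdequate A := by
  intro x hx i
  set z : Fin n → ℝ := fun j => x j ^ (m - 1) with hz
  have hev : Even (m - 2) := by obtain ⟨k, hk⟩ := hm; exact ⟨k-1, by omega⟩
  have hzero : (majorization A).mulVec z = 0 := by
    apply hM
    intro i
    have h1 : z i = x i ^ (m - 2) * x i := by
      rw [hz]
      have : m - 1 = m - 2 + 1 := by omega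
      simp only [this, pow_succ]
    rw [h1, mul_assoc]
    have h2 : x i ^ (m - 2) ≥ 0 := hev.pow_nonneg _
    have h3 := hx i
    rw [hblock x i] at h3
    exact mul_nonpos_of_nonneg_of_nonpos h2 h3
  rw [hblock x i, hzero]
  rfl
end

section
/- Let A be a row diagonal tensor of even order m and dimension n such that M(A) is a column adequate matrix. Then the tensor complementarity problem TCP(q, A) has a unique ω-solution for every q in R^n: if x and x' are both solutions of TCP(q, A), then A x^{m-1} + q = A (x')^{m-1} + q. -/
open Finset Matrix

/-- For a row diagonal tensor `A` of even order whose majorization matrix is column adequate,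
the tensor complementarity problem `TCP(q, A)` has a unique `ω`-solution for every `q`. -/
theorem tcp_omega_unique {m n : ℕ} (hm : Even m) (hm2 : 2 ≤ m)
    (A : Fin n → (Fin (m - 1) → Fin n) → ℝ) (hA : RowDiagonal A)
    (hM : MatrixColumnAdequate (majorization A)) :
    ∀ q x x' : Fin n → ℝ,
      (0 ≤ x ∧ (∀ i, 0 ≤ tmul A x i + q i) ∧ ∑ i, x i * (tmul A x i + q i) = 0) →
      (0 ≤ x' ∧ (∀ i, 0 ≤ tmul A x' i + q i) ∧ ∑ i, x' i * (tmul A x' i + q i) = 0) →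
      ∀ i, tmul A x i + q i = tmul A x' i + q i := by
  intro q x x' ⟨hx, hw, hc⟩ ⟨hx', hw', hc'⟩
  have hk : 0 < m - 1 := by omega
  have hterm : ∀ i, x i * (tmul A x i + q i) = 0 := by
    have := (Finset.sum_eq_zero_iff_of_nonneg
      (fun i _ => mul_nonneg (hx i) (hw i))).1 hc
    exact fun i => this i (Finset.mem_univ i)
  have hterm' : ∀ i, x' i * (tmul A x' i + q i) = 0 := by
    have := (Finset.sum_eq_zero_iff_of_nonneg
      (fun i _ => mul_nonneg (hx' i) (hw' i))).1 hc'
    exact fun i => this i (Finset.mem_univ i)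
  have hzw : ∀ i, x i ^ (m - 1) * (tmul A x i + q i) = 0 := by
    intro i
    rcases mul_eq_zero.1 (hterm i) with h | h
    · simp [h, zero_pow hk.ne']
    · simp [h]
  have hzw' : ∀ i, x' i ^ (m - 1) * (tmul A x' i + q i) = 0 := by
    intro i
    rcases mul_eq_zero.1 (hterm' i) with h | h
    · simp [h, zero_pow hk.ne']
    · simp [h]
  have hMz : ∀ i, (majorization A).mulVec (fun j => x j ^ (m - 1)) i = tmul A x i :=
    fun i => (tmul_eq_mulVec hk A hA x i).symm
  have hMz' : ∀ i, (majorization A).mulVec (fun j => x' j ^ (m - 1)) i = tmul A x' i :=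
    fun i => (tmul_eq_mulVec hk A hA x' i).symm
  have key : (majorization A).mulVec
      ((fun j => x j ^ (m - 1)) - fun j => x' j ^ (m - 1)) = 0 := by
    apply hM
    intro i
    have hmv : (majorization A).mulVec
        ((fun j => x j ^ (m - 1)) - fun j => x' j ^ (m - 1)) i
        = (tmul A x i + q i) - (tmul A x' i + q i) := by
      rw [Matrix.mulVec_sub]
      simp only [Pi.sub_apply, hMz i, hMz' i]
      ring
    rw [hmv]
    simp only [Pi.sub_apply]
    have hexp : (x i ^ (m - 1) - x' i ^ (m - 1)) *
        ((tmul A x i + q i) - (tmul A x' i + q i))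
        = x i ^ (m - 1) * (tmul A x i + q i)
          + x' i ^ (m - 1) * (tmul A x' i + q i)
          - (x i ^ (m - 1) * (tmul A x' i + q i)
            + x' i ^ (m - 1) * (tmul A x i + q i)) := by ring
    rw [hexp, hzw i, hzw' i]
    have h1 := mul_nonneg (pow_nonneg (hx i) (m - 1)) (hw' i)
    have h2 := mul_nonneg (pow_nonneg (hx' i) (m - 1)) (hw i)
    linarith
  intro i
  have h0 : (majorization A).mulVec
      ((fun j => x j ^ (m - 1)) - fun j => x' j ^ (m - 1)) i = 0 := by rw [key]; rfl
  rw [Matrix.mulVec_sub] at h0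
  simp only [Pi.sub_apply, hMz i, hMz' i] at h0
  linarith
end
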